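/- Let L be a Leibniz algebra over a field 𝕜 with left center Z. The operator d₀ is a graded derivation of degree 1 of the multiplication on C(L): for ω ∈ C^n(L) and η ∈ C^m(L), d₀(ω·η) = (d₀ω)·η + (−1)^n ω·(d₀η). -/

import Mathlib

open scoped TensorProduct

universe u v w

/-- A (left) Leibniz algebra over a field `𝕜`. -/
structure LeibnizAlg (𝕜 : Type u) [Field 𝕜] (L : Type v) [AddCommGroup L] [Module 𝕜 L] where
  br : L →ₗ[𝕜] L →ₗ[𝕜] L
  leibniz : ∀ a b c : L, br a (br b c) = br (br a b) c + br b (br a c)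

namespace LeibnizAlg

variable {𝕜 : Type u} [Field 𝕜] {L : Type v} [AddCommGroup L] [Module 𝕜 L]
variable (A : LeibnizAlg 𝕜 L)

/-- The left center `Z = {z | z ∘ e = 0 for all e}`. -/
def leftCenter : Submodule 𝕜 L where
  carrier := {z | ∀ e : L, A.br z e = 0}
  add_mem' := by
    intro a b ha hb
    simp only [Set.mem_setOf_eq] at *
    intro e
    rw [map_add, LinearMap.add_apply, ha e, hb e, add_zero]
  zero_mem' := by
    simp only [Set.mem_setOf_eq]
    intro e
    rw [map_zero, LinearMap.zero_apply]
  smul_mem' := by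
    intro c x hx
    simp only [Set.mem_setOf_eq] at *
    intro e
    rw [map_smul, LinearMap.smul_apply, hx e, smul_zero]

lemma mem_leftCenter_iff {z : L} : z ∈ A.leftCenter ↔ ∀ e : L, A.br z e = 0 := Iff.rfl

/-- The symmetric product `(a,b) = a∘b + b∘a`. -/
def sp (a b : L) : L := A.br a b + A.br b a

lemma sp_mem (a b : L) : A.sp a b ∈ A.leftCenter := by
  rw [mem_leftCenter_iff]
  intro e
  have h1 := A.leibniz a b e
  have h2 := A.leibniz b a e
  have hx : A.br (A.br a b) e = A.br a (A.br b e) - A.br b (A.br a e) :=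
    eq_sub_iff_add_eq.mpr h1.symm
  have hy : A.br (A.br b a) e = A.br b (A.br a e) - A.br a (A.br b e) :=
    eq_sub_iff_add_eq.mpr h2.symm
  rw [sp, map_add, LinearMap.add_apply, hx, hy]
  abel

/-- The symmetric product, seen as valued in the left center. -/
def spZ (a b : L) : A.leftCenter := ⟨A.sp a b, A.sp_mem a b⟩

lemma br_mem (e : L) (f : A.leftCenter) : A.br e (f : L) ∈ A.leftCenter := by
  rw [mem_leftCenter_iff]
  intro e'
  have h := A.leibniz e (f : L) e'
  have hf : A.br (f : L) e' = 0 := (A.mem_leftCenter_iff.mp f.2) e'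
  have hf2 : A.br (f : L) (A.br e e') = 0 := (A.mem_leftCenter_iff.mp f.2) _
  rw [hf] at h
  rw [map_zero] at h
  rw [hf2, add_zero] at h
  exact h.symm

/-- The bracket of `L` on its left center. -/
def brZ (e : L) (f : A.leftCenter) : A.leftCenter := ⟨A.br e (f : L), A.br_mem e f⟩

/-- The symmetric product as a bilinear map into the left center. -/
noncomputable def spL : L →ₗ[𝕜] L →ₗ[𝕜] A.leftCenter :=
  LinearMap.mk₂ 𝕜 A.spZ
    (fun a a' b => Subtype.ext (by
      simp only [spZ, sp, map_add, LinearMap.add_apply, Submodule.coe_add]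
      abel))
    (fun c a b => Subtype.ext (by
      simp only [spZ, sp, map_smul, LinearMap.smul_apply, SetLike.val_smul, smul_add]))
    (fun a b b' => Subtype.ext (by
      simp only [spZ, sp, map_add, LinearMap.add_apply, Submodule.coe_add]
      abel))
    (fun c a b => Subtype.ext (by
      simp only [spZ, sp, map_smul, LinearMap.smul_apply, SetLike.val_smul, smul_add]))

end LeibnizAlg

/-- `(S, ι)` is (a model of) the symmetric algebra of the module `Z`:
it satisfies the universal property. -/
def IsSymAlg {𝕜 : Type u} [Field 𝕜] {Z : Type v} [AddCommGroup Z] [Module 𝕜 Z]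
    (S : Type w) [CommRing S] [Algebra 𝕜 S] (ι : Z →ₗ[𝕜] S) : Prop :=
  ∀ (B : Type (max u v w)) [CommRing B] [Algebra 𝕜 B] (g : Z →ₗ[𝕜] B),
    ∃! h : S →ₐ[𝕜] B, ∀ z : Z, h (ι z) = g z

section Shuffles

/-- All ways of splitting a list into a signed pair of complementary subsequences. -/
def shSplits {α : Type*} : List α → List (ℤ × List α × List α)
  | [] => [(1, [], [])]
  | a :: l =>
      ((shSplits l).map fun t => (t.1, a :: t.2.1, t.2.2)) ++
      ((shSplits l).map fun t => ((-1) ^ t.2.1.length * t.1, t.2.1, a :: t.2.2))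

/-- Signed sum over all `(p, l.length - p)`-shuffles of the list `l`. -/
def shSum {α : Type*} {S : Type*} [AddCommGroup S] (p : ℕ) (l : List α)
    (F : List α → List α → S) : S :=
  (((shSplits l).filter fun t => t.2.1.length == p).map fun t => t.1 • F t.2.1 t.2.2).sum

/-- Unsigned sum over all `(p, l.length - p)`-shuffles of the list `l`. -/
def shSumU {α : Type*} {S : Type*} [AddCommMonoid S] (p : ℕ) (l : List α)
    (F : List α → List α → S) : S :=
  (((shSplits l).filter fun t => t.2.1.length == p).map fun t => F t.2.1 t.2.2).sum

end Shuffles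

section Cochains

variable {𝕜 : Type u} [Field 𝕜] {L : Type v} [AddCommGroup L] [Module 𝕜 L]
variable (A : LeibnizAlg 𝕜 L)
variable (S : Type w) [CommRing S] [Algebra 𝕜 S]
variable (ι : A.leftCenter →ₗ[𝕜] S)

/-- `ω` is an `n`-cochain in the standard complex `C(L) = C(L, Z, S^•(Z))`:
its component `ω k`, defined on tuples `es` of `n - 2k` elements of `L` and `k`
elements of the left center, is multilinear, symmetric in the `Z`-arguments, and
weakly skew-symmetric in the `L`-arguments. -/
structure IsCochain (n : ℕ) (ω : ℕ → List L → List A.leftCenter → S) : Prop where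
  add_e : ∀ (k : ℕ) (p q : List L) (x y : L) (fs : List A.leftCenter),
    2*k + (p.length + 1 + q.length) = n → fs.length = k →
    ω k (p ++ (x + y) :: q) fs = ω k (p ++ x :: q) fs + ω k (p ++ y :: q) fs
  smul_e : ∀ (k : ℕ) (p q : List L) (c : 𝕜) (x : L) (fs : List A.leftCenter),
    2*k + (p.length + 1 + q.length) = n → fs.length = k →
    ω k (p ++ (c • x) :: q) fs = c • ω k (p ++ x :: q) fs
  add_f : ∀ (k : ℕ) (es : List L) (p q : List A.leftCenter) (x y : A.leftCenter),
    2*k + es.length = n → p.length + 1 + q.length = k →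
    ω k es (p ++ (x + y) :: q) = ω k es (p ++ x :: q) + ω k es (p ++ y :: q)
  smul_f : ∀ (k : ℕ) (es : List L) (p q : List A.leftCenter) (c : 𝕜) (x : A.leftCenter),
    2*k + es.length = n → p.length + 1 + q.length = k →
    ω k es (p ++ (c • x) :: q) = c • ω k es (p ++ x :: q)
  symm_f : ∀ (k : ℕ) (es : List L) (p q : List A.leftCenter) (x y : A.leftCenter),
    2*k + es.length = n → p.length + 2 + q.length = k →
    ω k es (p ++ x :: y :: q) = ω k es (p ++ y :: x :: q)
  skew : ∀ (k : ℕ) (p q : List L) (x y : L) (fs : List A.leftCenter),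
    2*k + (p.length + 2 + q.length) = n → fs.length = k →
    ω k (p ++ x :: y :: q) fs + ω k (p ++ y :: x :: q) fs
      = - ω (k+1) (p ++ q) (A.spZ x y :: fs)

/-- The product of an `n`-cochain and an `m`-cochain. -/
def cmul (n m : ℕ) (ω η : ℕ → List L → List A.leftCenter → S) :
    ℕ → List L → List A.leftCenter → S :=
  fun k es fs => ∑ i ∈ Finset.range (k+1),
    if 2*i ≤ n ∧ 2*(k-i) ≤ m then
      shSum (n - 2*i) es fun es₁ es₂ =>
        shSumU i fs fun fs₁ fs₂ => ω i es₁ fs₁ * η (k-i) es₂ fs₂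
    else 0

/-- The operator `d₀` of the standard complex, where `ρ` is the action of `L` on
`S^•(Z)` by derivations. -/
def cd0 (ρ : L → Derivation 𝕜 S S) (ω : ℕ → List L → List A.leftCenter → S) :
    ℕ → List L → List A.leftCenter → S :=
  fun k es fs =>
    (∑ a ∈ Finset.range es.length,
      (-1 : ℤ)^a • ρ (es.getD a 0) (ω k (es.eraseIdx a) fs))
    + ∑ a ∈ Finset.range es.length, ∑ b ∈ Finset.Ico (a+1) es.length,
        (-1 : ℤ)^(a+1) •
          ω k ((es.eraseIdx a).set (b-1) (A.br (es.getD a 0) (es.getD b 0))) fs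

/-- The operator `δ` of the standard complex. -/
def cdel (ω : ℕ → List L → List A.leftCenter → S) :
    ℕ → List L → List A.leftCenter → S :=
  fun k es fs => ∑ j ∈ Finset.range fs.length,
    ω (k-1) (((fs.getD j 0 : A.leftCenter) : L) :: es) (fs.eraseIdx j)

/-- The symmetric product with values pushed into `S = S^•(Z)`. -/
noncomputable def spS : L →ₗ[𝕜] L →ₗ[𝕜] S := (A.spL).compr₂ ι

/-- The `S^•(Z)`-bilinear extension of the symmetric product to `S^•(Z) ⊗ L`. -/
noncomputable def pairT : (S ⊗[𝕜] L) →ₗ[𝕜] (S ⊗[𝕜] L) →ₗ[𝕜] S :=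
  TensorProduct.curry <|
    (TensorProduct.lift (LinearMap.mul 𝕜 S)).comp <|
      (TensorProduct.map (TensorProduct.lift (LinearMap.mul 𝕜 S))
        (TensorProduct.lift (spS A S ι))).comp
        (TensorProduct.tensorTensorTensorComm 𝕜 S L S L).toLinearMap

/-- `ω` is a representable `n`-cochain: each of the maps
`e ↦ ω k (es ++ [e]) fs` lies in the image of `φ = pairT`. -/
def IsRepr (n : ℕ) (ω : ℕ → List L → List A.leftCenter → S) : Prop :=
  ∀ (k : ℕ) (es : List L) (fs : List A.leftCenter),
    2*k + (es.length + 1) = n → fs.length = k →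
    ∃ x : S ⊗[𝕜] L, ∀ e : L, pairT A S ι x ((1 : S) ⊗ₜ[𝕜] e) = ω k (es ++ [e]) fs

/-- `ωt` is a choice of `φ`-preimages `ω̃` for the representable cochain `ω`. -/
def IsPre (n : ℕ) (ω : ℕ → List L → List A.leftCenter → S)
    (ωt : ℕ → List L → List A.leftCenter → S ⊗[𝕜] L) : Prop :=
  ∀ (k : ℕ) (es : List L) (fs : List A.leftCenter),
    2*k + (es.length + 1) = n → fs.length = k →
    ∀ e : L, pairT A S ι (ωt k es fs) ((1 : S) ⊗ₜ[𝕜] e) = ω k (es ++ [e]) fs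

/-- `ωc k es x fs` is the extension `ω̌` of `ω (k+1) es (·::fs)` from `Z` to all of
`S = S^•(Z)` in its first `Z`-slot, by the Leibniz rule. -/
structure IsExt (n : ℕ) (ω : ℕ → List L → List A.leftCenter → S)
    (ωc : ℕ → List L → S → List A.leftCenter → S) : Prop where
  on_gen : ∀ (k : ℕ) (es : List L) (fs : List A.leftCenter) (f : A.leftCenter),
    2*(k+1) + es.length = n → fs.length = k →
    ωc k es (ι f) fs = ω (k+1) es (f :: fs)
  map_add : ∀ (k : ℕ) (es : List L) (fs : List A.leftCenter) (x y : S),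
    2*(k+1) + es.length = n → fs.length = k →
    ωc k es (x + y) fs = ωc k es x fs + ωc k es y fs
  map_smul : ∀ (k : ℕ) (es : List L) (fs : List A.leftCenter) (c : 𝕜) (x : S),
    2*(k+1) + es.length = n → fs.length = k →
    ωc k es (c • x) fs = c • ωc k es x fs
  mul_rule : ∀ (k : ℕ) (es : List L) (fs : List A.leftCenter) (x y : S),
    2*(k+1) + es.length = n → fs.length = k →
    ωc k es (x * y) fs = x * ωc k es y fs + y * ωc k es x fs

/-- The operation `ω ◇ η` built from the Leibniz-rule extension `ωc` of `ω`. -/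
def cdiam (n m : ℕ) (ωc : ℕ → List L → S → List A.leftCenter → S)
    (η : ℕ → List L → List A.leftCenter → S) : ℕ → List L → List A.leftCenter → S :=
  fun k es fs => ∑ i ∈ Finset.range (k+1),
    if 2*(i+1) ≤ n ∧ 2*(k-i) ≤ m then
      shSum (n - 2*i - 2) es fun es₁ es₂ =>
        shSumU (k-i) fs fun fs₁ fs₂ => ωc i es₁ (η (k-i) es₂ fs₁) fs₂
    else 0

/-- The operation `ω • η` built from chosen `φ`-preimages `ωt`, `ηt`. -/
noncomputable def cbull (n m : ℕ)
    (ωt ηt : ℕ → List L → List A.leftCenter → S ⊗[𝕜] L) :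
    ℕ → List L → List A.leftCenter → S :=
  fun k es fs => (-1 : ℤ)^(m-1) • ∑ i ∈ Finset.range (k+1),
    if 2*i + 1 ≤ n ∧ 2*(k-i) + 1 ≤ m then
      shSum (n - 2*i - 1) es fun es₁ es₂ =>
        shSumU i fs fun fs₁ fs₂ => pairT A S ι (ωt i es₁ fs₁) (ηt (k-i) es₂ fs₂)
    else 0

/-- The bracket `{ω, η} = ω•η + ω◇η − (−1)^{nm} η◇ω` of representable cochains. -/
noncomputable def cpbr (n m : ℕ)
    (ω η : ℕ → List L → List A.leftCenter → S)
    (ωt ηt : ℕ → List L → List A.leftCenter → S ⊗[𝕜] L)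
    (ωc ηc : ℕ → List L → S → List A.leftCenter → S) :
    ℕ → List L → List A.leftCenter → S :=
  fun k es fs => cbull A S ι n m ωt ηt k es fs + cdiam A S n m ωc η k es fs
    - (-1 : ℤ)^(n*m) • cdiam A S m n ηc ω k es fs

/-- The canonical 3-cochain `Θ`. -/
def ThetaC : ℕ → List L → List A.leftCenter → S :=
  fun k es fs => match k, es, fs with
    | 0, [e₁, e₂, e₃], [] => ι (A.spZ (A.br e₁ e₂) e₃)
    | 1, [e], [f] => - ι (A.spZ e (f : L))
    | _, _, _ => 0

/-- The 2-cochain `ζ` with `ζ₀ = (·,·)` and `ζ₁(f) = −2f`. -/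
def zetaC : ℕ → List L → List A.leftCenter → S :=
  fun k es fs => match k, es, fs with
    | 0, [e₁, e₂], [] => ι (A.spZ e₁ e₂)
    | 1, [], [f] => (-2 : 𝕜) • ι f
    | _, _, _ => 0

/-- The representable 1-cochain `e^♭ = (e, ·)`. -/
def eflat (e : L) : ℕ → List L → List A.leftCenter → S :=
  fun k es fs => match k, es, fs with
    | 0, [e'], [] => ι (A.spZ e e')
    | _, _, _ => 0

end Cochains

namespace ShAux

variable {α : Type*} {S : Type*} [AddCommGroup S]

lemma shSplits_length : ∀ (l : List α) (s : ℤ × List α × List α), s ∈ shSplits l →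
    s.2.1.length + s.2.2.length = l.length := by
  intro l
  induction l with
  | nil => intro s hs; simp [shSplits] at hs; subst hs; simp
  | cons a t ih =>
    intro s hs
    simp only [shSplits, List.mem_append, List.mem_map] at hs
    rcases hs with ⟨u, hu, rfl⟩ | ⟨u, hu, rfl⟩
    · have := ih u hu; simp only [List.length_cons]; omega
    · have := ih u hu; simp only [List.length_cons]; omega
      
lemma shSum_congr {p : ℕ} {t : List α} {F G : List α → List α → S}
    (h : ∀ l r, l.length = p → l.length + r.length = t.length → F l r = G l r) :
    shSum p t F = shSum p t G := by
  unfold shSum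
  congr 1
  apply List.map_congr_left
  intro s hs
  rw [List.mem_filter] at hs
  have h1 : s.2.1.length = p := by simpa using hs.2
  rw [h _ _ h1 (shSplits_length t s hs.1)]

lemma shSum_nil (p : ℕ) (F : List α → List α → S) :
    shSum p ([] : List α) F = if p = 0 then F [] [] else 0 := by
  unfold shSum shSplits
  by_cases hp : p = 0
  · simp [hp, List.filter]
  · have : (0 == p) = false := by simpa using fun h => hp h.symm
    simp [hp, List.filter, this]

lemma shSum_cons_zero (e : α) (t : List α) (F : List α → List α → S) :
    shSum 0 (e :: t) F = shSum 0 t (fun l r => F l (e :: r)) := by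
  unfold shSum
  rw [show shSplits (e :: t) = ((shSplits t).map fun s => (s.1, e :: s.2.1, s.2.2)) ++
      ((shSplits t).map fun s => ((-1) ^ s.2.1.length * s.1, s.2.1, e :: s.2.2)) from rfl]
  rw [List.filter_append, List.filter_map, List.filter_map]
  have h1 : ((fun t : ℤ × List α × List α => t.2.1.length == 0) ∘
      fun s : ℤ × List α × List α => (s.1, e :: s.2.1, s.2.2)) = fun _ => false := by
    funext s; simp
  have h2 : ((fun t : ℤ × List α × List α => t.2.1.length == 0) ∘
      fun s : ℤ × List α × List α => ((-1) ^ s.2.1.length * s.1, s.2.1, e :: s.2.2)) =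
      fun s => s.2.1.length == 0 := rfl
  rw [h1, h2, List.filter_false, List.map_nil, List.nil_append, List.map_map]
  apply congrArg
  apply List.map_congr_left
  intro s hs
  rw [List.mem_filter] at hs
  have h1 : s.2.1.length = 0 := by simpa using hs.2
  simp only [Function.comp_apply, h1, pow_zero, one_mul]

lemma shSum_cons_succ (p : ℕ) (e : α) (t : List α) (F : List α → List α → S) :
    shSum (p+1) (e :: t) F = shSum p t (fun l r => F (e :: l) r)
      + ((-1:ℤ)^(p+1)) • shSum (p+1) t (fun l r => F l (e :: r)) := by
  unfold shSum
  rw [show shSplits (e :: t) = ((shSplits t).map fun s => (s.1, e :: s.2.1, s.2.2)) ++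
      ((shSplits t).map fun s => ((-1) ^ s.2.1.length * s.1, s.2.1, e :: s.2.2)) from rfl]
  rw [List.filter_append, List.filter_map, List.filter_map]
  have h1 : ((fun t : ℤ × List α × List α => t.2.1.length == p+1) ∘
      fun s : ℤ × List α × List α => (s.1, e :: s.2.1, s.2.2)) =
      fun s => s.2.1.length == p := by
    funext s; simp
  have h2 : ((fun t : ℤ × List α × List α => t.2.1.length == p+1) ∘
      fun s : ℤ × List α × List α => ((-1) ^ s.2.1.length * s.1, s.2.1, e :: s.2.2)) =
      fun s => s.2.1.length == p+1 := rfl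
  rw [h1, h2, List.map_append, List.sum_append, List.map_map, List.map_map]
  congr 1
  rw [List.smul_sum, List.map_map]
  apply congrArg
  apply List.map_congr_left
  intro s hs
  rw [List.mem_filter] at hs
  have h1 : s.2.1.length = p + 1 := by simpa using hs.2
  simp only [Function.comp_apply, h1, mul_smul]

lemma shSum_zero (t : List α) (F : List α → List α → S) :
    shSum 0 t F = F [] t := by
  induction t generalizing F with
  | nil => simp [shSum_nil]
  | cons a t ih => rw [shSum_cons_zero, ih]

lemma sum_map_add {β : Type*} (M : List β) (f g : β → S) :
    (M.map (fun x => f x + g x)).sum = (M.map f).sum + (M.map g).sum := by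
  induction M with
  | nil => simp
  | cons a t ih => simp [ih]; abel

lemma shSum_add (p : ℕ) (t : List α) (F G : List α → List α → S) :
    shSum p t (fun l r => F l r + G l r) = shSum p t F + shSum p t G := by
  unfold shSum
  rw [← sum_map_add]
  apply congrArg
  apply List.map_congr_left
  intro s _
  simp [smul_add]

lemma shSum_zero_fn (p : ℕ) (t : List α) :
    shSum p t (fun _ _ => (0 : S)) = 0 := by
  unfold shSum
  simp

lemma shSum_zsmul (c : ℤ) (p : ℕ) (t : List α) (F : List α → List α → S) :
    shSum p t (fun l r => c • F l r) = c • shSum p t F := by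
  unfold shSum
  rw [List.smul_sum, List.map_map]
  apply congrArg
  apply List.map_congr_left
  intro s _
  simp [smul_comm c s.1]

lemma shSum_neg (p : ℕ) (t : List α) (F : List α → List α → S) :
    shSum p t (fun l r => - F l r) = - shSum p t F := by
  have := shSum_zsmul (-1) p t F
  simpa using this

lemma shSum_finsum {ι : Type*} (B : Finset ι) (p : ℕ) (t : List α)
    (F : ι → List α → List α → S) :
    shSum p t (fun l r => ∑ i ∈ B, F i l r) = ∑ i ∈ B, shSum p t (F i) := by
  classical
  induction B using Finset.induction with
  | empty => simp [shSum_zero_fn]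
  | insert _ _ hx ih =>
    rename_i a B
    rw [Finset.sum_insert hx, ← ih, ← shSum_add]
    apply shSum_congr
    intro l r _ _
    rw [Finset.sum_insert hx]

lemma shSum_listsum {β : Type*} (M : List β) (p : ℕ) (t : List α)
    (F : β → List α → List α → S) :
    shSum p t (fun l r => (M.map (fun x => F x l r)).sum) = (M.map (fun x => shSum p t (F x))).sum := by
  induction M with
  | nil => simp [shSum_zero_fn]
  | cons a M ih =>
    simp only [List.map_cons, List.sum_cons, ← ih, ← shSum_add]

lemma sum_map_smul {β : Type*} (c : ℤ) (M : List β) (f : β → S) :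
    (M.map (fun x => c • f x)).sum = c • (M.map f).sum := by
  induction M with
  | nil => simp
  | cons a t ih => simp [ih, smul_add]

lemma shSumU_congr {p : ℕ} {t : List α} {F G : List α → List α → S}
    (h : ∀ l r, l.length = p → l.length + r.length = t.length → F l r = G l r) :
    shSumU p t F = shSumU p t G := by
  unfold shSumU
  congr 1
  apply List.map_congr_left
  intro s hs
  rw [List.mem_filter] at hs
  have h1 : s.2.1.length = p := by simpa using hs.2
  rw [h _ _ h1 (shSplits_length t s hs.1)]

lemma shSumU_zero_fn (p : ℕ) (t : List α) :
    shSumU p t (fun _ _ => (0 : S)) = 0 := by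
  simp [shSumU]

lemma shSum_set_sum (w : α → α) (d : α) :
    ∀ (t : List α) (p : ℕ) (F : List α → List α → S),
    (∑ b ∈ Finset.range t.length, shSum p (t.set b (w (t.getD b d))) F)
      = shSum p t (fun l r =>
          (∑ b ∈ Finset.range l.length, F (l.set b (w (l.getD b d))) r)
          + ∑ b ∈ Finset.range r.length, F l (r.set b (w (r.getD b d)))) := by
  intro t
  induction t with
  | nil =>
    intro p F
    rw [shSum_nil]
    split_ifs <;> simp
  | cons c t ih =>
    intro p F
    simp only [List.length_cons]
    rw [Finset.sum_range_succ'
      (fun b => shSum p ((c :: t).set b (w ((c :: t).getD b d))) F) t.length]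
    simp only [List.set_cons_succ, List.getD_cons_succ, List.set_cons_zero, List.getD_cons_zero]
    rcases p with _ | q
    · -- p = 0
      simp only [shSum_cons_zero]
      rw [ih 0 (fun l r => F l (c :: r))]
      rw [← shSum_add]
      apply shSum_congr
      intro l r _ _
      simp only [List.length_cons]
      rw [Finset.sum_range_succ'
        (fun b => F l ((c :: r).set b (w ((c :: r).getD b d)))) r.length]
      simp only [List.set_cons_succ, List.getD_cons_succ, List.set_cons_zero,
        List.getD_cons_zero]
      abel
    · -- p = q + 1
      simp only [shSum_cons_succ]
      rw [Finset.sum_add_distrib, ← Finset.smul_sum]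
      rw [ih q (fun l r => F (c :: l) r), ih (q+1) (fun l r => F l (c :: r))]
      have hL1 : shSum q t (fun l r =>
            (∑ b ∈ Finset.range l.length, F (c :: l.set b (w (l.getD b d))) r)
            + ∑ b ∈ Finset.range r.length, F (c :: l) (r.set b (w (r.getD b d))))
          = shSum q t (fun l r => ∑ b ∈ Finset.range l.length,
              F (c :: l.set b (w (l.getD b d))) r)
            + shSum q t (fun l r => ∑ b ∈ Finset.range r.length,
              F (c :: l) (r.set b (w (r.getD b d)))) := shSum_add _ _ _ _
      have hL2 : shSum (q+1) t (fun l r =>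
            (∑ b ∈ Finset.range l.length, F (l.set b (w (l.getD b d))) (c :: r))
            + ∑ b ∈ Finset.range r.length, F l (c :: r.set b (w (r.getD b d))))
          = shSum (q+1) t (fun l r => ∑ b ∈ Finset.range l.length,
              F (l.set b (w (l.getD b d))) (c :: r))
            + shSum (q+1) t (fun l r => ∑ b ∈ Finset.range r.length,
              F l (c :: r.set b (w (r.getD b d)))) := shSum_add _ _ _ _
      rw [hL1, hL2]
      -- right-hand side
      have hR1 : shSum q t (fun l r =>
            (∑ b ∈ Finset.range (c :: l).length,
              F ((c :: l).set b (w ((c :: l).getD b d))) r)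
            + ∑ b ∈ Finset.range r.length, F (c :: l) (r.set b (w (r.getD b d))))
          = (shSum q t (fun l r => F (w c :: l) r)
              + shSum q t (fun l r => ∑ b ∈ Finset.range l.length,
                  F (c :: l.set b (w (l.getD b d))) r))
            + shSum q t (fun l r => ∑ b ∈ Finset.range r.length,
                F (c :: l) (r.set b (w (r.getD b d)))) := by
        rw [← shSum_add, ← shSum_add]
        apply shSum_congr
        intro l r _ _
        simp only [List.length_cons]
        rw [Finset.sum_range_succ'
          (fun b => F ((c :: l).set b (w ((c :: l).getD b d))) r) l.length]
        simp only [List.set_cons_succ, List.getD_cons_succ, List.set_cons_zero,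
          List.getD_cons_zero]
        abel
      have hR2 : shSum (q+1) t (fun l r =>
            (∑ b ∈ Finset.range l.length, F (l.set b (w (l.getD b d))) (c :: r))
            + ∑ b ∈ Finset.range (c :: r).length,
              F l ((c :: r).set b (w ((c :: r).getD b d))))
          = (shSum (q+1) t (fun l r => F l (w c :: r))
              + shSum (q+1) t (fun l r => ∑ b ∈ Finset.range l.length,
                  F (l.set b (w (l.getD b d))) (c :: r)))
            + shSum (q+1) t (fun l r => ∑ b ∈ Finset.range r.length,
                F l (c :: r.set b (w (r.getD b d)))) := by
        rw [← shSum_add, ← shSum_add]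
        apply shSum_congr
        intro l r _ _
        simp only [List.length_cons]
        rw [Finset.sum_range_succ'
          (fun b => F l ((c :: r).set b (w ((c :: r).getD b d)))) r.length]
        simp only [List.set_cons_succ, List.getD_cons_succ, List.set_cons_zero,
          List.getD_cons_zero]
        abel
      rw [hR1, hR2]
      simp only [smul_add]
      abel

end ShAux


section D1Aux

variable {𝕜 : Type u} [Field 𝕜] {L : Type v} [AddCommGroup L] [Module 𝕜 L]
variable (A : LeibnizAlg 𝕜 L) (S : Type w) [CommRing S] [Algebra 𝕜 S]
variable (ρ : L → Derivation 𝕜 S S)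

/-- The core operator underlying `cd0`, acting on functions of the `L`-arguments only. -/
def D1 (u : List L → S) (es : List L) : S :=
  (∑ a ∈ Finset.range es.length, (-1:ℤ)^a • ρ (es.getD a 0) (u (es.eraseIdx a)))
  + ∑ a ∈ Finset.range es.length, ∑ b ∈ Finset.Ico (a+1) es.length,
      (-1:ℤ)^(a+1) • u ((es.eraseIdx a).set (b-1) (A.br (es.getD a 0) (es.getD b 0)))

lemma cd0_eq_D1 (ω : ℕ → List L → List A.leftCenter → S) (k : ℕ) (es : List L)
    (fs : List A.leftCenter) :
    cd0 A S ρ ω k es fs = D1 A S ρ (fun l => ω k l fs) es := rfl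

lemma D1_nil (u : List L → S) : D1 A S ρ u [] = 0 := by simp [D1]

lemma D1_zero_fn (es : List L) : D1 A S ρ (fun _ => (0:S)) es = 0 := by simp [D1]

lemma D1_add (u v : List L → S) (es : List L) :
    D1 A S ρ (fun l => u l + v l) es = D1 A S ρ u es + D1 A S ρ v es := by
  simp only [D1, map_add, smul_add, Finset.sum_add_distrib]
  abel

lemma D1_zsmul (c : ℤ) (u : List L → S) (es : List L) :
    D1 A S ρ (fun l => c • u l) es = c • D1 A S ρ u es := by
  simp only [D1, map_zsmul, smul_add, Finset.smul_sum]
  congr 1 <;> (apply Finset.sum_congr rfl; intro a _)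
  · rw [smul_comm]
  · apply Finset.sum_congr rfl; intro b _; rw [smul_comm]

lemma D1_listsum {β : Type*} (M : List β) (G : β → List L → S) (es : List L) :
    D1 A S ρ (fun l => (M.map (fun x => G x l)).sum) es
      = (M.map (fun x => D1 A S ρ (G x) es)).sum := by
  induction M with
  | nil => simp [D1_zero_fn]
  | cons a M ih => simp only [List.map_cons, List.sum_cons, D1_add, ih]

lemma D1_cons (u : List L → S) (e : L) (t : List L) :
    D1 A S ρ u (e :: t) = ρ e (u t)
      - (∑ b ∈ Finset.range t.length, u (t.set b (A.br e (t.getD b 0))))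
      - D1 A S ρ (fun l => u (e :: l)) t := by
  unfold D1
  simp only [List.length_cons]
  rw [Finset.sum_range_succ'
    (fun a => (-1:ℤ)^a • (ρ ((e::t).getD a 0)) (u ((e::t).eraseIdx a)))]
  rw [Finset.sum_range_succ' (fun a => ∑ b ∈ Finset.Ico (a+1) (t.length+1),
    (-1:ℤ)^(a+1) • u (((e::t).eraseIdx a).set (b-1)
      (A.br ((e::t).getD a 0) ((e::t).getD b 0))))]
  have e1 : ∀ a : ℕ, (-1:ℤ)^(a+1) • (ρ ((e::t).getD (a+1) 0)) (u ((e::t).eraseIdx (a+1)))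
      = -((-1:ℤ)^a • (ρ (t.getD a 0)) (u (e :: t.eraseIdx a))) := by
    intro a
    rw [List.getD_cons_succ, List.eraseIdx_cons_succ, pow_succ, mul_neg_one, neg_smul]
  have e2 : (∑ b ∈ Finset.Ico (0+1) (t.length+1), (-1:ℤ)^(0+1) •
        u (((e::t).eraseIdx 0).set (b-1) (A.br ((e::t).getD 0 0) ((e::t).getD b 0))))
      = - ∑ b ∈ Finset.range t.length, u (t.set b (A.br e (t.getD b 0))) := by
    rw [Finset.sum_Ico_eq_sum_range]
    simp only [Nat.add_sub_cancel]
    rw [← Finset.sum_neg_distrib]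
    apply Finset.sum_congr rfl
    intro b _
    have h1 : 1 + b - 1 = b := by omega
    have h2 : (e::t).getD (1+b) 0 = t.getD b 0 := by rw [Nat.add_comm, List.getD_cons_succ]
    rw [h1, h2]
    simp
  have e3 : ∀ a : ℕ, (∑ b ∈ Finset.Ico (a+1+1) (t.length+1), (-1:ℤ)^(a+1+1) •
        u (((e::t).eraseIdx (a+1)).set (b-1) (A.br ((e::t).getD (a+1) 0) ((e::t).getD b 0))))
      = - ∑ b ∈ Finset.Ico (a+1) t.length, (-1:ℤ)^(a+1) •
          u (e :: ((t.eraseIdx a).set (b-1) (A.br (t.getD a 0) (t.getD b 0)))) := by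
    intro a
    rw [Finset.sum_Ico_eq_sum_range, Finset.sum_Ico_eq_sum_range]
    have hlen : t.length + 1 - (a+1+1) = t.length - (a+1) := by omega
    rw [hlen, ← Finset.sum_neg_distrib]
    apply Finset.sum_congr rfl
    intro b _
    rw [List.getD_cons_succ, List.eraseIdx_cons_succ]
    have h1 : a+1+1+b-1 = (a+b)+1 := by omega
    have h2 : a+1+b-1 = a+b := by omega
    have h3 : a+1+1+b = (a+1+b)+1 := by omega
    rw [h1, h2, h3, List.getD_cons_succ, List.set_cons_succ]
    rw [show a+1+1 = (a+1)+1 from rfl, pow_succ ((-1:ℤ)) (a+1), mul_neg_one, neg_smul]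
  simp only [e1, e3]
  rw [e2]
  simp only [List.getD_cons_zero, List.eraseIdx_cons_zero, pow_zero, one_smul,
    Finset.sum_neg_distrib]
  abel

open ShAux in
lemma derivation_shSum (D : Derivation 𝕜 S S) (p : ℕ) (t : List L)
    (F : List L → List L → S) :
    D (shSum p t F) = shSum p t (fun l r => D (F l r)) := by
  unfold shSum
  rw [show (D (List.map (fun s => s.1 • F s.2.1 s.2.2)
      ((shSplits t).filter fun s => s.2.1.length == p)).sum : S)
    = D.toLinearMap (List.map (fun s => s.1 • F s.2.1 s.2.2)
      ((shSplits t).filter fun s => s.2.1.length == p)).sum from rfl]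
  rw [map_list_sum D.toLinearMap, List.map_map]
  congr 1
  apply List.map_congr_left
  intro s _
  simp only [Function.comp_apply, map_zsmul]
  rfl

lemma D1_finsum {ι : Type*} (B : Finset ι) (G : ι → List L → S) (es : List L) :
    D1 A S ρ (fun l => ∑ i ∈ B, G i l) es = ∑ i ∈ B, D1 A S ρ (G i) es := by
  classical
  induction B using Finset.induction with
  | empty => simp [D1_zero_fn]
  | insert _ _ hx ih =>
    rename_i a B
    rw [Finset.sum_insert hx, ← ih, ← D1_add]
    congr 1
    funext l
    rw [Finset.sum_insert hx]

open ShAux in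
lemma D1_shSum_mul (es : List L) : ∀ (p : ℕ) (u v : List L → S),
    D1 A S ρ (fun es' => shSum p es' (fun l r => u l * v r)) es
      = shSum (p+1) es (fun l r => D1 A S ρ u l * v r)
        + (-1:ℤ)^p • shSum p es (fun l r => u l * D1 A S ρ v r) := by
  induction es with
  | nil =>
    intro p u v
    rw [D1_nil, shSum_nil, shSum_nil]
    rcases p with _ | q
    · simp [D1_nil]
    · simp
  | cons e t ih =>
    intro p u v
    rw [show D1 A S ρ (fun es' => shSum p es' (fun l r => u l * v r)) (e :: t)
      = (ρ e) (shSum p t (fun l r => u l * v r))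
        - (∑ b ∈ Finset.range t.length,
            shSum p (t.set b (A.br e (t.getD b 0))) (fun l r => u l * v r))
        - D1 A S ρ (fun l => shSum p (e :: l) (fun l' r => u l' * v r)) t from
      D1_cons A S ρ _ e t]
    have h1 : (ρ e) (shSum p t (fun l r => u l * v r))
        = shSum p t (fun l r => (ρ e) (u l) * v r)
          + shSum p t (fun l r => u l * (ρ e) (v r)) := by
      rw [derivation_shSum, ← shSum_add]
      apply shSum_congr
      intro l r _ _
      rw [Derivation.leibniz]
      simp only [smul_eq_mul]
      ring
    have h2 : (∑ b ∈ Finset.range t.length,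
          shSum p (t.set b (A.br e (t.getD b 0))) (fun l r => u l * v r))
        = shSum p t (fun l r =>
            (∑ b ∈ Finset.range l.length, u (l.set b (A.br e (l.getD b 0)))) * v r)
          + shSum p t (fun l r =>
            u l * (∑ b ∈ Finset.range r.length, v (r.set b (A.br e (r.getD b 0))))) := by
      rw [shSum_set_sum (fun x => A.br e x) 0 t p, ← shSum_add]
      apply shSum_congr
      intro l r _ _
      rw [Finset.sum_mul, Finset.mul_sum]
    rw [h1, h2]
    rcases p with _ | q
    · -- p = 0
      have h3 : D1 A S ρ (fun l => shSum 0 (e :: l) (fun l' r => u l' * v r)) t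
          = shSum 1 t (fun l r => D1 A S ρ u l * v (e :: r))
            + shSum 0 t (fun l r => u l * D1 A S ρ (fun r' => v (e :: r')) r) := by
        rw [show (fun l => shSum 0 (e :: l) (fun l' r => u l' * v r))
            = fun l => shSum 0 l (fun l' r => u l' * v (e :: r)) from
          funext fun l => shSum_cons_zero e l _]
        rw [ih 0 u (fun r => v (e :: r))]
        simp
      rw [h3, shSum_cons_succ, shSum_cons_zero]
      have hA : shSum 0 t (fun l r => D1 A S ρ u (e :: l) * v r)
          = shSum 0 t (fun l r => (ρ e) (u l) * v r)
            + (-(shSum 0 t (fun l r =>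
                (∑ b ∈ Finset.range l.length, u (l.set b (A.br e (l.getD b 0)))) * v r))
              + -(shSum 0 t (fun l r => D1 A S ρ (fun l' => u (e :: l')) l * v r))) := by
        rw [← shSum_neg, ← shSum_neg, ← shSum_add, ← shSum_add]
        apply shSum_congr
        intro l r _ _
        rw [D1_cons]
        ring
      have hB : shSum 0 t (fun l r => u l * D1 A S ρ v (e :: r))
          = shSum 0 t (fun l r => u l * (ρ e) (v r))
            + (-(shSum 0 t (fun l r =>
                u l * (∑ b ∈ Finset.range r.length, v (r.set b (A.br e (r.getD b 0))))))
              + -(shSum 0 t (fun l r => u l * D1 A S ρ (fun r' => v (e :: r')) r))) := by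
        rw [← shSum_neg, ← shSum_neg, ← shSum_add, ← shSum_add]
        apply shSum_congr
        intro l r _ _
        rw [D1_cons]
        ring
      have h0 : shSum 0 t (fun l r => D1 A S ρ (fun l' => u (e :: l')) l * v r) = 0 := by
        rw [shSum_zero, D1_nil, zero_mul]
      rw [hA, hB, h0]
      simp only [pow_zero, pow_one, one_smul, neg_smul, neg_neg, neg_zero]
      abel
    · -- p = q + 1
      have hsq : ((-1:ℤ)^(q+1)) * ((-1:ℤ)^(q+1)) = 1 := by
        rw [← pow_add]
        exact Even.neg_one_pow ⟨q+1, rfl⟩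
      have h3 : D1 A S ρ (fun l => shSum (q+1) (e :: l) (fun l' r => u l' * v r)) t
          = (shSum (q+1) t (fun l r => D1 A S ρ (fun l' => u (e :: l')) l * v r)
              + (-1:ℤ)^q • shSum q t (fun l r => u (e :: l) * D1 A S ρ v r))
            + (-1:ℤ)^(q+1) • (shSum (q+1+1) t (fun l r => D1 A S ρ u l * v (e :: r))
              + (-1:ℤ)^(q+1) • shSum (q+1) t
                  (fun l r => u l * D1 A S ρ (fun r' => v (e :: r')) r)) := by
        rw [show (fun l => shSum (q+1) (e :: l) (fun l' r => u l' * v r))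
            = fun l => shSum q l (fun l' r => u (e :: l') * v r)
              + (-1:ℤ)^(q+1) • shSum (q+1) l (fun l' r => u l' * v (e :: r)) from
          funext fun l => shSum_cons_succ q e l _]
        rw [D1_add, D1_zsmul, ih q (fun l => u (e :: l)) v, ih (q+1) u (fun r => v (e :: r))]
      rw [h3, shSum_cons_succ, shSum_cons_succ]
      have hA : shSum (q+1) t (fun l r => D1 A S ρ u (e :: l) * v r)
          = shSum (q+1) t (fun l r => (ρ e) (u l) * v r)
            + (-(shSum (q+1) t (fun l r =>
                (∑ b ∈ Finset.range l.length, u (l.set b (A.br e (l.getD b 0)))) * v r))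
              + -(shSum (q+1) t (fun l r => D1 A S ρ (fun l' => u (e :: l')) l * v r))) := by
        rw [← shSum_neg, ← shSum_neg, ← shSum_add, ← shSum_add]
        apply shSum_congr
        intro l r _ _
        rw [D1_cons]
        ring
      have hB : shSum (q+1) t (fun l r => u l * D1 A S ρ v (e :: r))
          = shSum (q+1) t (fun l r => u l * (ρ e) (v r))
            + (-(shSum (q+1) t (fun l r =>
                u l * (∑ b ∈ Finset.range r.length, v (r.set b (A.br e (r.getD b 0))))))
              + -(shSum (q+1) t (fun l r => u l * D1 A S ρ (fun r' => v (e :: r')) r))) := by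
        rw [← shSum_neg, ← shSum_neg, ← shSum_add, ← shSum_add]
        apply shSum_congr
        intro l r _ _
        rw [D1_cons]
        ring
      rw [hA, hB]
      have hq1 : (-1:ℤ)^(q+1) = -(-1:ℤ)^q := by rw [pow_succ, mul_neg_one]
      have hq2 : (-1:ℤ)^(q+1+1) = (-1:ℤ)^q := by
        rw [pow_succ, pow_succ, mul_neg_one, mul_neg_one, neg_neg]
      have hcc : ((-1:ℤ)^q) * ((-1:ℤ)^q) = 1 := by
        rw [← pow_add]; exact Even.neg_one_pow ⟨q, rfl⟩
      simp only [hq2, hq1]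
      generalize (-1:ℤ)^q = c at hcc ⊢
      simp only [neg_smul, smul_neg, smul_add, smul_smul, hcc, one_smul, neg_neg, mul_one,
        one_mul, mul_neg, neg_mul]
      abel

open ShAux in
lemma cd0_cmul_main (n m : ℕ) (ω η : ℕ → List L → List A.leftCenter → S)
    (k : ℕ) (es : List L) (fs : List A.leftCenter)
    (hlen : 2*k + es.length = n + m + 1) :
    cd0 A S ρ (cmul A S n m ω η) k es fs
      = cmul A S (n+1) m (cd0 A S ρ ω) η k es fs
        + (-1 : ℤ)^n • cmul A S n (m+1) ω (cd0 A S ρ η) k es fs := by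
  rw [cd0_eq_D1]
  have hcm : (fun l => cmul A S n m ω η k l fs)
      = fun l => ∑ i ∈ Finset.range (k+1), (if 2*i ≤ n ∧ 2*(k-i) ≤ m then
          shSum (n-2*i) l (fun l' r => shSumU i fs fun g h => ω i l' g * η (k-i) r h)
        else 0) := rfl
  rw [hcm, D1_finsum]
  have key : ∀ i ∈ Finset.range (k+1),
      D1 A S ρ (fun l => if 2*i ≤ n ∧ 2*(k-i) ≤ m then
          shSum (n-2*i) l (fun l' r => shSumU i fs fun g h => ω i l' g * η (k-i) r h)
        else 0) es
      = (if 2*i ≤ n+1 ∧ 2*(k-i) ≤ m then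
            shSum (n+1-2*i) es
              (fun l r => shSumU i fs fun g h => cd0 A S ρ ω i l g * η (k-i) r h)
          else 0)
        + (-1:ℤ)^n • (if 2*i ≤ n ∧ 2*(k-i) ≤ m+1 then
            shSum (n-2*i) es
              (fun l r => shSumU i fs fun g h => ω i l g * cd0 A S ρ η (k-i) r h)
          else 0) := by
    intro i hi
    rw [Finset.mem_range] at hi
    by_cases hc : 2*i ≤ n ∧ 2*(k-i) ≤ m
    · rw [if_pos ⟨Nat.le_succ_of_le hc.1, hc.2⟩, if_pos ⟨hc.1, Nat.le_succ_of_le hc.2⟩]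
      simp only [if_pos hc]
      have hp1 : n+1-2*i = (n-2*i)+1 := by omega
      have hsgn : (-1:ℤ)^n = (-1:ℤ)^(n-2*i) := by
        conv_lhs => rw [show n = (n-2*i) + 2*i by omega]
        rw [pow_add, pow_mul]
        norm_num
      rw [hp1, hsgn]
      simp only [shSumU]
      rw [show (fun l => shSum (n-2*i) l (fun l' r =>
            (List.map (fun s => ω i l' s.2.1 * η (k-i) r s.2.2)
              ((shSplits fs).filter fun s => s.2.1.length == i)).sum))
          = fun l => (List.map (fun s => shSum (n-2*i) l
              (fun l' r => ω i l' s.2.1 * η (k-i) r s.2.2))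
              ((shSplits fs).filter fun s => s.2.1.length == i)).sum from
        funext fun l => shSum_listsum _ _ l _]
      rw [D1_listsum]
      have step : ∀ s ∈ (shSplits fs).filter (fun s => s.2.1.length == i),
          D1 A S ρ (fun l => shSum (n-2*i) l
              (fun l' r => ω i l' s.2.1 * η (k-i) r s.2.2)) es
            = shSum ((n-2*i)+1) es
                (fun l r => D1 A S ρ (fun l' => ω i l' s.2.1) l * η (k-i) r s.2.2)
              + (-1:ℤ)^(n-2*i) • shSum (n-2*i) es
                (fun l r => ω i l s.2.1 * D1 A S ρ (fun r' => η (k-i) r' s.2.2) r) :=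
        fun s _ => D1_shSum_mul A S ρ es (n-2*i) _ _
      rw [List.map_congr_left step, sum_map_add, sum_map_smul, ← shSum_listsum,
        ← shSum_listsum]
      rfl
    · simp only [if_neg hc]
      rw [D1_zero_fn]
      by_cases hc1 : 2*i ≤ n
      · have hm2 : m < 2*(k-i) := by
          rcases Nat.lt_or_ge m (2*(k-i)) with h | h
          · exact h
          · exact absurd ⟨hc1, h⟩ hc
        rw [if_neg (fun h => Nat.not_le.mpr hm2 h.2)]
        by_cases hc2 : 2*(k-i) ≤ m+1
        · rw [if_pos ⟨hc1, hc2⟩]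
          have hr : shSum (n-2*i) es
              (fun l r => shSumU i fs fun g h => ω i l g * cd0 A S ρ η (k-i) r h) = 0 := by
            rw [shSum_congr (G := fun _ _ => (0:S)) ?_, shSum_zero_fn]
            intro l r hlp hlr
            have hr0 : r = [] := by
              have : r.length = 0 := by omega
              exact List.length_eq_zero_iff.mp this
            subst hr0
            rw [shSumU_congr (G := fun _ _ => (0:S)) ?_, shSumU_zero_fn]
            intro g h _ _
            have hz : cd0 A S ρ η (k-i) [] h = 0 := by simp [cd0]
            rw [hz, mul_zero]
          rw [hr]
          simp
        · rw [if_neg (fun h => hc2 h.2)]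
          simp
      · rw [if_neg (c := 2*i ≤ n ∧ 2*(k-i) ≤ m+1) (fun h => hc1 h.1)]
        by_cases hc2 : 2*i ≤ n+1 ∧ 2*(k-i) ≤ m
        · rw [if_pos hc2]
          have h0 : n+1-2*i = 0 := by omega
          rw [h0, shSum_zero]
          rw [shSumU_congr (G := fun _ _ => (0:S)) ?_, shSumU_zero_fn]
          · simp
          intro g h _ _
          have hz : cd0 A S ρ ω i [] g = 0 := by simp [cd0]
          rw [hz, zero_mul]
        · rw [if_neg hc2]
          simp
  rw [Finset.sum_congr rfl key, Finset.sum_add_distrib, ← Finset.smul_sum]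
  rfl

end D1Aux

section Theorems

variable {𝕜 : Type u} [Field 𝕜] {L : Type v} [AddCommGroup L] [Module 𝕜 L]

theorem cd0_derivation (A : LeibnizAlg 𝕜 L) (S : Type w) [CommRing S] [Algebra 𝕜 S]
    (ι : A.leftCenter →ₗ[𝕜] S) (hS : IsSymAlg S ι)
    (ρ : L → Derivation 𝕜 S S)
    (hρ : ∀ (e : L) (f : A.leftCenter), ρ e (ι f) = ι (A.brZ e f))
    (n m : ℕ) (ω η : ℕ → List L → List A.leftCenter → S)
    (hω : IsCochain A S n ω) (hη : IsCochain A S m η) :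
    ∀ (k : ℕ) (es : List L) (fs : List A.leftCenter),
      2*k + es.length = n + m + 1 → fs.length = k →
      cd0 A S ρ (cmul A S n m ω η) k es fs
        = cmul A S (n+1) m (cd0 A S ρ ω) η k es fs
          + (-1 : ℤ)^n • cmul A S n (m+1) ω (cd0 A S ρ η) k es fs := by
  intro k es fs hlen _
  exact cd0_cmul_main A S ρ n m ω η k es fs hlen

end Theorems
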